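/- Every non-cyclic proper subgroup of T'_{8·3^q} is conjugate to ⟨b, a, w^{3^r}⟩ ≅ Q₈ × Z/3^{q-r} for some 0 < r ≤ q. -/

import Mathlib

/-- Relations of the generalized binary tetrahedral group
`T'_{8·3^q} = ⟨b, a, w | a² = b² = (ab)², a⁴ = w^{3^q} = 1, wa = bw, wb = abw⟩`,
with `b` the letter `0`, `a` the letter `1` and `w` the letter `2`. -/
def TprimeRels (q : ℕ) : Set (FreeGroup (Fin 3)) :=
  { (FreeGroup.of 1) ^ 2 * ((FreeGroup.of 0) ^ 2)⁻¹,
    (FreeGroup.of 1) ^ 2 * ((FreeGroup.of 1 * FreeGroup.of 0) ^ 2)⁻¹,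
    (FreeGroup.of 1) ^ 4,
    (FreeGroup.of 2) ^ (3 ^ q),
    (FreeGroup.of 2 * FreeGroup.of 1) * (FreeGroup.of 0 * FreeGroup.of 2)⁻¹,
    (FreeGroup.of 2 * FreeGroup.of 0) *
      (FreeGroup.of 1 * FreeGroup.of 0 * FreeGroup.of 2)⁻¹ }

/-- The generalized binary tetrahedral group `T'_{8·3^q}`. -/
abbrev Tprime (q : ℕ) := PresentedGroup (TprimeRels q)

/-- The generator `b` of `T'_{8·3^q}`. -/
def Tprime.b (q : ℕ) : Tprime q := PresentedGroup.of 0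

/-- The generator `a` of `T'_{8·3^q}`. -/
def Tprime.a (q : ℕ) : Tprime q := PresentedGroup.of 1

/-- The generator `w` of `T'_{8·3^q}`. -/
def Tprime.w (q : ℕ) : Tprime q := PresentedGroup.of 2

open QuaternionGroup


abbrev Q8 := QuaternionGroup 2

def rhoFun : Q8 → Q8 := fun x =>
  if x = a 1 then xa 0
  else if x = a 3 then xa 2
  else if x = xa 0 then xa 3
  else if x = xa 2 then xa 1
  else if x = xa 3 then a 1
  else if x = xa 1 then a 3
  else x

lemma rhoFun_mul : ∀ x y : Q8, rhoFun (x * y) = rhoFun x * rhoFun y := by decide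

lemma rhoFun_invol : ∀ x : Q8, rhoFun (rhoFun (rhoFun x)) = x := by decide

def rho : MulAut Q8 where
  toFun := rhoFun
  invFun := rhoFun ∘ rhoFun
  left_inv := rhoFun_invol
  right_inv := rhoFun_invol
  map_mul' := rhoFun_mul

lemma rho_cube : rho ^ 3 = 1 := by
  ext x
  show rhoFun (rhoFun (rhoFun x)) = x
  exact rhoFun_invol x

example : (a 1 : Q8)^2 = (xa 0)^2 ∧ (a 1 : Q8)^2 = (a 1 * xa 0)^2 ∧ (a 1 : Q8)^4 = 1 := by decide
example : rho (a 1) = xa 0 ∧ rho (xa 0) = a 1 * xa 0 := by decide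
lemma q8_central : ∀ v : Q8, v ≠ 1 → v ≠ a 2 → v^2 = a 2 := by decide
lemma q8_noncomm : ∀ v y : Q8, v ≠ 1 → v ≠ a 2 →
    ¬ (v * (y * rho v * y⁻¹) = (y * rho v * y⁻¹) * v) ∧
    ¬ (v * (y * rho (rho v) * y⁻¹) = (y * rho (rho v) * y⁻¹) * v) := by decide
lemma q8_comm_a2 : ∀ y : Q8, y * a 2 = a 2 * y := by decide
lemma q8_card : Fintype.card Q8 = 8 := by decide
lemma q8_orderOf (v : Q8) (h1 : v ≠ 1) (h2 : v ≠ a 2) : orderOf v = 4 := by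
  have h4 : v ^ 4 = 1 := by revert h1 h2; revert v; decide
  have h2' : v ^ 2 ≠ 1 := by revert h1 h2; revert v; decide
  have := orderOf_eq_prime_pow (p := 2) (n := 1) (by simpa using h2') (by simpa using h4)
  simpa using this

open SemidirectProduct Multiplicative

lemma rho_pow_mod (m : ℕ) : rho ^ m = rho ^ (m % 3) := pow_eq_pow_mod m rho_cube

variable (q : ℕ)

instance : NeZero (3^q) := ⟨pow_ne_zero _ (by norm_num)⟩

def actHom (hq : 1 ≤ q) : Multiplicative (ZMod (3^q)) →* MulAut Q8 where
  toFun c := rho ^ (toAdd c).val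
  map_one' := by simp
  map_mul' x y := by
    have h3 : (3:ℕ) ∣ 3^q := dvd_pow_self 3 (Nat.one_le_iff_ne_zero.mp hq)
    show rho ^ (toAdd x + toAdd y).val = _
    rw [ZMod.val_add, rho_pow_mod, Nat.mod_mod_of_dvd _ h3, ← rho_pow_mod, pow_add]

abbrev GG (hq : 1 ≤ q) := Q8 ⋊[actHom q hq] Multiplicative (ZMod (3^q))

variable (hq : 1 ≤ q)

def fgen : Fin 3 → GG q hq := ![inl (xa 0), inl (a 1), inr (ofAdd 1)]

lemma fact_lt (hq : 1 ≤ q) : Fact (1 < 3^q) := ⟨by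
  calc 1 < 3^1 := by norm_num
  _ ≤ 3^q := Nat.pow_le_pow_right (by norm_num) hq⟩

lemma act_one : actHom q hq (ofAdd 1) = rho := by
  haveI := fact_lt q hq
  show rho ^ (toAdd (ofAdd (1 : ZMod (3^q)))).val = rho
  rw [toAdd_ofAdd, ZMod.val_one, pow_one]

lemma fgen_rels : ∀ r ∈ TprimeRels q, FreeGroup.lift (fgen q hq) r = 1 := by
  intro r hr
  have key : ∀ i : Fin 3, FreeGroup.lift (fgen q hq) (FreeGroup.of i) = fgen q hq i :=
    fun i => FreeGroup.lift_apply_of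
  simp only [TprimeRels, Set.mem_insert_iff, Set.mem_singleton_iff] at hr
  have hw : FreeGroup.lift (fgen q hq) (FreeGroup.of 2) = inr (ofAdd 1) := key 2
  have ha : FreeGroup.lift (fgen q hq) (FreeGroup.of 1) = inl (a 1) := key 1
  have hb : FreeGroup.lift (fgen q hq) (FreeGroup.of 0) = inl (xa 0) := key 0
  rcases hr with rfl|rfl|rfl|rfl|rfl|rfl
  · rw [map_mul, map_inv, map_pow, map_pow, ha, hb, ← map_pow, ← map_pow, ← map_inv, ← map_mul]
    rw [show ((a 1 :Q8)^2 * ((xa 0 :Q8)^2)⁻¹) = 1 by decide, map_one]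
  · rw [map_mul, map_inv, map_pow, map_pow, map_mul, ha, hb, ← map_mul, ← map_pow, ← map_pow,
      ← map_inv, ← map_mul]
    rw [show ((a 1 :Q8)^2 * (((a 1 : Q8) * xa 0)^2)⁻¹) = 1 by decide, map_one]
  · rw [map_pow, ha, ← map_pow, show ((a 1 : Q8)^4) = 1 by decide, map_one]
  · rw [map_pow, hw, ← map_pow, ← ofAdd_nsmul]
    norm_num
  · rw [map_mul, map_inv, map_mul, map_mul, ha, hb, hw]
    rw [mul_inv_eq_one]
    ext
    · simp only [mul_left, left_inr, left_inl, right_inr, right_inl, one_mul, mul_one, map_one, act_one q hq]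
      decide
    · simp [mul_right, right_inr, right_inl, mul_comm]
  · rw [map_mul, map_inv, map_mul, map_mul, map_mul, ha, hb, hw]
    rw [mul_inv_eq_one]
    ext
    · simp only [mul_left, left_inr, left_inl, right_inr, right_inl, one_mul, mul_one, map_one, act_one q hq]
      decide
    · simp [mul_right, right_inr, right_inl, mul_comm]

def phi : Tprime q →* GG q hq := PresentedGroup.toGroup (fgen_rels q hq)

lemma q8_top (P : Subgroup Q8) (v y : Q8) (hv : v ∈ P) (hy : y ∈ P)
    (h1 : v ≠ 1) (h2 : v ≠ a 2) (hc : ¬ (v * y = y * v)) : P = ⊤ := by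
  have h4 : orderOf v = 4 := q8_orderOf v h1 h2
  have hzp : Subgroup.zpowers v ≤ P := (Subgroup.zpowers_le).mpr hv
  have hcard4 : Nat.card (Subgroup.zpowers v) = 4 := by rw [Nat.card_zpowers, h4]
  have hd1 : (4:ℕ) ∣ Nat.card P := hcard4 ▸ Subgroup.card_dvd_of_le hzp
  have hd2 : Nat.card P ∣ 8 := by
    have h := Subgroup.card_subgroup_dvd_card P
    rwa [show Nat.card Q8 = 8 by rw [Nat.card_eq_fintype_card, q8_card]] at h
  have hcases : Nat.card P = 4 ∨ Nat.card P = 8 := by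
    rcases hd1 with ⟨k, hk⟩
    rcases hd2 with ⟨m, hm⟩
    rw [hk, mul_assoc] at hm
    have hkm : k * m = 2 := by omega
    have hk2 : k ∣ 2 := ⟨m, hkm.symm⟩
    have : k ≤ 2 := Nat.le_of_dvd (by norm_num) hk2
    interval_cases k
    · omega
    · left; omega
    · right; omega
  rcases hcases with hc4 | hc8
  · exfalso
    have hPz : Subgroup.zpowers v = P :=
      Subgroup.eq_of_le_of_card_ge hzp (by rw [hcard4, hc4])
    rw [← hPz] at hy
    rcases Subgroup.mem_zpowers_iff.mp hy with ⟨k, hk⟩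
    exact hc (hk ▸ ((Commute.refl v).zpow_right k))
  · exact Subgroup.eq_top_of_card_eq P (by rw [hc8, Nat.card_eq_fintype_card, q8_card])

lemma q8_closure_top : (Subgroup.closure {xa 0, a 1} : Subgroup Q8) = ⊤ :=
  q8_top _ (a 1) (xa 0)
    (Subgroup.subset_closure (by simp))
    (Subgroup.subset_closure (by simp))
    (by decide) (by decide) (by decide)

lemma phi_b : phi q hq (Tprime.b q) = inl (xa 0) := by
  unfold phi Tprime.b
  rw [PresentedGroup.toGroup.of]
  simp [fgen]
lemma phi_a : phi q hq (Tprime.a q) = inl (a 1) := by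
  unfold phi Tprime.a
  rw [PresentedGroup.toGroup.of]
  simp [fgen]
lemma phi_w : phi q hq (Tprime.w q) = inr (ofAdd 1) := by
  unfold phi Tprime.w
  rw [PresentedGroup.toGroup.of]
  simp [fgen]

lemma inr_pow (n : ℕ) : (inr (ofAdd 1) : GG q hq) ^ n = inr (ofAdd (n : ZMod (3^q))) := by
  rw [← map_pow, ← ofAdd_nsmul]
  norm_num

lemma gg_closure_top :
    (Subgroup.closure {inl (xa 0), inl (a 1), inr (ofAdd 1)} : Subgroup (GG q hq)) = ⊤ := by
  rw [Subgroup.eq_top_iff']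
  intro x
  rw [← inl_left_mul_inr_right x]
  refine mul_mem ?_ ?_
  · have hmap : Subgroup.map (inl : Q8 →* GG q hq) (Subgroup.closure {xa 0, a 1}) ≤
        Subgroup.closure {inl (xa 0), inl (a 1), inr (ofAdd 1)} := by
      rw [MonoidHom.map_closure]
      apply Subgroup.closure_mono
      rintro _ ⟨v, hv, rfl⟩
      rcases hv with rfl | rfl
      · exact Set.mem_insert _ _
      · exact Set.mem_insert_of_mem _ (Set.mem_insert _ _)
    exact hmap ⟨x.left, by rw [q8_closure_top]; trivial, rfl⟩
  · have h1 : (((toAdd x.right).val : ℕ) : ZMod (3^q)) = toAdd x.right :=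
      ZMod.natCast_rightInverse _
    have : (inr x.right : GG q hq) = (inr (ofAdd 1)) ^ (toAdd x.right).val := by
      rw [inr_pow, h1, ofAdd_toAdd]
    rw [this]
    exact pow_mem (Subgroup.subset_closure (by simp)) _

lemma phi_surj : Function.Surjective (phi q hq) := by
  rw [← MonoidHom.range_eq_top]
  rw [eq_top_iff, ← gg_closure_top q hq, Subgroup.closure_le]
  rintro x (rfl | rfl | rfl)
  · exact ⟨Tprime.b q, phi_b q hq⟩
  · exact ⟨Tprime.a q, phi_a q hq⟩
  · exact ⟨Tprime.w q, phi_w q hq⟩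

section NormalForm

variable {q}

local notation "B" => Tprime.b q
local notation "A" => Tprime.a q
local notation "W" => Tprime.w q

lemma rel_mk {r : FreeGroup (Fin 3)} (hr : r ∈ TprimeRels q) :
    PresentedGroup.mk (TprimeRels q) r = 1 :=
  (QuotientGroup.eq_one_iff r).mpr (Subgroup.subset_normalClosure hr)

lemma relA2B2 : A^2 = B^2 := by
  have h := rel_mk (q := q) (Set.mem_insert _ _)
  rw [map_mul, map_inv, map_pow, map_pow, mul_inv_eq_one] at h
  exact h

lemma relA2AB : A^2 = (A*B)^2 := by
  have h := rel_mk (q := q) (Set.mem_insert_of_mem _ (Set.mem_insert _ _))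
  rw [map_mul, map_inv, map_pow, map_pow, map_mul, mul_inv_eq_one] at h
  exact h

lemma relA4 : A^4 = 1 := by
  have h := rel_mk (q := q)
    (Set.mem_insert_of_mem _ (Set.mem_insert_of_mem _ (Set.mem_insert _ _)))
  rw [map_pow] at h
  exact h

lemma relW3q : W^(3^q) = 1 := by
  have h := rel_mk (q := q)
    (Set.mem_insert_of_mem _ (Set.mem_insert_of_mem _ (Set.mem_insert_of_mem _
      (Set.mem_insert _ _))))
  rw [map_pow] at h
  exact h

lemma relWA : W * A = B * W := by
  have h := rel_mk (q := q)
    (Set.mem_insert_of_mem _ (Set.mem_insert_of_mem _ (Set.mem_insert_of_mem _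
      (Set.mem_insert_of_mem _ (Set.mem_insert _ _)))))
  rw [map_mul, map_inv, map_mul, map_mul, mul_inv_eq_one] at h
  exact h

lemma relWB : W * B = A * B * W := by
  have h := rel_mk (q := q)
    (Set.mem_insert_of_mem _ (Set.mem_insert_of_mem _ (Set.mem_insert_of_mem _
      (Set.mem_insert_of_mem _ (Set.mem_insert_of_mem _ rfl)))))
  rw [map_mul, map_inv, map_mul, map_mul, map_mul, mul_inv_eq_one] at h
  exact h

lemma relB4 : B^4 = 1 := by
  have h : (B^2)^2 = (A^2)^2 := by rw [relA2B2]
  rw [← pow_mul, ← pow_mul] at h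
  rw [show 4 = 2*2 by rfl] at *
  rw [h]
  exact relA4

lemma relBAB : B * A * B = A := by
  have h := relA2AB (q := q)
  have h2 : A * A = A * (B * A * B) := by
    calc A * A = A^2 := (sq A).symm
    _ = (A*B)^2 := h
    _ = A * B * (A * B) := sq (A*B)
    _ = A * (B * A * B) := by group
  exact (mul_left_cancel h2).symm

lemma relBA : B * A = A^3 * B := by
  have hb3 : B⁻¹ = B^3 := by
    apply inv_eq_of_mul_eq_one_left
    rw [← pow_succ]
    exact relB4
  have h : B * A = A * B⁻¹ :=
    calc B * A = B * A * B * B⁻¹ := by group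
    _ = A * B⁻¹ := by rw [relBAB]
  rw [h, hb3, pow_succ, ← relA2B2]
  group

lemma relBApow (i : ℕ) : B * A^i = A^(3*i) * B := by
  induction i with
  | zero => simp
  | succ n ih =>
    rw [pow_succ, ← mul_assoc, ih, mul_assoc, relBA, mul_comm 3 (n+1)]
    rw [show (n+1)*3 = 3*n + 3 by ring, pow_add]
    group

lemma relWApow (i : ℕ) : W * A^i = B^i * W := by
  induction i with
  | zero => simp
  | succ n ih =>
    rw [pow_succ, ← mul_assoc, ih, mul_assoc, relWA, pow_succ]
    group

lemma relWBpow (j : ℕ) : W * B^j = (A*B)^j * W := by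
  induction j with
  | zero => simp
  | succ n ih =>
    rw [pow_succ, ← mul_assoc, ih, mul_assoc, relWB, pow_succ]
    group

lemma Apow_mod (i : ℕ) : A^i = A^(i % 4) := pow_eq_pow_mod i relA4
lemma Bpow_mod (i : ℕ) : B^i = B^(i % 4) := pow_eq_pow_mod i relB4
lemma Wpow_mod (n : ℕ) : W^n = W^(n % 3^q) := pow_eq_pow_mod n relW3q

def NF : Set (Tprime q) := {x | ∃ i j n : ℕ, j ≤ 1 ∧ x = A^i * B^j * W^n}

lemma one_mem_NF : (1 : Tprime q) ∈ NF := ⟨0, 0, 0, by norm_num, by simp⟩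

lemma A_mul_NF : ∀ x ∈ NF (q := q), A * x ∈ NF := by
  rintro x ⟨i, j, n, hj, rfl⟩
  exact ⟨i+1, j, n, hj, by rw [pow_succ]; group⟩

lemma B_mul_NF : ∀ x ∈ NF (q := q), B * x ∈ NF := by
  rintro x ⟨i, j, n, hj, rfl⟩
  interval_cases j
  · refine ⟨3*i, 1, n, le_refl _, ?_⟩
    rw [show A^i * B^0 * W^n = A^i * W^n by simp, ← mul_assoc, relBApow]
    rw [pow_one]
  · refine ⟨3*i + 2, 0, n, by norm_num, ?_⟩
    calc B * (A^i * B^1 * W^n) = (B * A^i) * B * W^n := by group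
    _ = A^(3*i) * B * B * W^n := by rw [relBApow]
    _ = A^(3*i) * (B * B) * W^n := by rw [mul_assoc (A^(3*i))]
    _ = A^(3*i) * B^2 * W^n := by rw [← sq]
    _ = A^(3*i) * A^2 * W^n := by rw [← relA2B2]
    _ = A^(3*i+2) * B^0 * W^n := by rw [pow_add]; group

lemma W_mul_NF : ∀ x ∈ NF (q := q), W * x ∈ NF := by
  rintro x ⟨i, j, n, hj, rfl⟩
  have key : W * (A^i * B^j * W^n) = B^i * (A*B)^j * W^(n+1) := by
    rw [show W * (A^i * B^j * W^n) = (W * A^i) * B^j * W^n by group, relWApow,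
      show B^i * W * B^j * W^n = B^i * (W * B^j) * W^n by group, relWBpow]
    rw [pow_succ]
    group
  rw [key, Bpow_mod]
  have hmod : i % 4 < 4 := Nat.mod_lt _ (by norm_num)
  interval_cases j
  · -- B^(i%4) * 1 * W^(n+1)
    interval_cases h : i % 4
    · exact ⟨0, 0, n+1, by norm_num, by simp⟩
    · exact ⟨0, 1, n+1, by norm_num, by simp⟩
    · exact ⟨2, 0, n+1, by norm_num, by rw [← relA2B2]; simp⟩
    · refine ⟨2, 1, n+1, by norm_num, ?_⟩
      rw [pow_one, show (B:Tprime q)^3 = B^2 * B from pow_succ B 2, ← relA2B2]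
      simp
  · rw [pow_one]
    interval_cases h : i % 4
    · exact ⟨1, 1, n+1, by norm_num, by simp⟩
    · refine ⟨1, 0, n+1, by norm_num, ?_⟩
      rw [pow_one, show B * (A * B) * W^(n+1) = (B * A * B) * W^(n+1) by group, relBAB]
      simp
    · refine ⟨3, 1, n+1, by norm_num, ?_⟩
      rw [show B^2 * (A*B) * W^(n+1) = A^2 * (A * B) * W^(n+1) by rw [relA2B2], pow_one]
      rw [show A^2 * (A*B) * W^(n+1) = A^3 * B * W^(n+1) by group]
    · refine ⟨3, 0, n+1, by norm_num, ?_⟩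
      rw [show (B:Tprime q)^3 = B^2 * B from pow_succ B 2, ← relA2B2]
      rw [show A^2 * B * (A*B) * W^(n+1) = A^2 * (B * A * B) * W^(n+1) by group, relBAB]
      rw [show A^2 * A * W^(n+1) = A^(3:ℕ) * B^0 * W^(n+1) by rw [show (A:Tprime q)^(3:ℕ) = A^2 * A from pow_succ A 2]; group]

lemma all_mem_NF : ∀ x : Tprime q, x ∈ NF := by
  intro x
  -- the submonoid of left-multipliers preserving NF
  let D : Submonoid (Tprime q) :=
    { carrier := {g | ∀ y ∈ NF (q := q), g * y ∈ NF},
      one_mem' := by intro y hy; simpa using hy,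
      mul_mem' := by
        intro g h hg hh y hy
        rw [mul_assoc]
        exact hg _ (hh _ hy) }
  have hA : A ∈ D := A_mul_NF
  have hB : B ∈ D := B_mul_NF
  have hW : W ∈ D := W_mul_NF
  have hAi : A⁻¹ ∈ D := by
    have : (A : Tprime q)⁻¹ = A^3 := by
      apply inv_eq_of_mul_eq_one_left
      rw [← pow_succ]; exact relA4
    rw [this]; exact pow_mem hA 3
  have hBi : B⁻¹ ∈ D := by
    have : (B : Tprime q)⁻¹ = B^3 := by
      apply inv_eq_of_mul_eq_one_left
      rw [← pow_succ]; exact relB4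
    rw [this]; exact pow_mem hB 3
  have hWi : W⁻¹ ∈ D := by
    have : (W : Tprime q)⁻¹ = W^(3^q - 1) := by
      apply inv_eq_of_mul_eq_one_left
      rw [← pow_succ]
      rw [show 3^q - 1 + 1 = 3^q from Nat.succ_pred_eq_of_pos (pow_pos (by norm_num) q)]
      exact relW3q
    rw [this]; exact pow_mem hW _
  have hclosure : (Subgroup.closure {B, A, W} : Subgroup (Tprime q)) = ⊤ := by
    rw [eq_top_iff, ← PresentedGroup.closure_range_of (TprimeRels q)]
    apply Subgroup.closure_mono
    rintro _ ⟨i, rfl⟩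
    fin_cases i
    · exact Set.mem_insert _ _
    · exact Set.mem_insert_of_mem _ (Set.mem_insert _ _)
    · exact Set.mem_insert_of_mem _ (Set.mem_insert_of_mem _ rfl)
  have hx : x ∈ Submonoid.closure (({B, A, W} : Set (Tprime q)) ∪ {B, A, W}⁻¹) := by
    have h1 : x ∈ (Subgroup.closure {B, A, W} : Subgroup (Tprime q)).toSubmonoid := by
      rw [hclosure]; trivial
    rwa [Subgroup.closure_toSubmonoid] at h1
  have hD : x ∈ D := by
    refine Submonoid.closure_le.mpr ?_ hx
    rintro g (hg | hg)
    · rcases hg with rfl | rfl | rfl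
      · exact hB
      · exact hA
      · exact hW
    · rw [Set.mem_inv] at hg
      rcases hg with h | h | h <;>
        [ (have hg' : g = B⁻¹ := by rw [← h, inv_inv]);
          (have hg' : g = A⁻¹ := by rw [← h, inv_inv]);
          (have hg' : g = W⁻¹ := by rw [← h, inv_inv])]
      · rw [hg']; exact hBi
      · rw [hg']; exact hAi
      · rw [hg']; exact hWi
  have := hD 1 one_mem_NF
  simpa using this

end NormalForm

def psi (q : ℕ) : Fin 4 × Fin 2 × Fin (3^q) → Tprime q :=
  fun p => (Tprime.a q)^(p.1 : ℕ) * (Tprime.b q)^(p.2.1 : ℕ) * (Tprime.w q)^(p.2.2 : ℕ)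

lemma psi_surj (q : ℕ) : Function.Surjective (psi q) := by
  intro x
  obtain ⟨i, j, n, hj, rfl⟩ := all_mem_NF x
  refine ⟨(⟨i % 4, Nat.mod_lt _ (by norm_num)⟩, ⟨j, by omega⟩,
    ⟨n % 3^q, Nat.mod_lt _ (pow_pos (by norm_num) q)⟩), ?_⟩
  simp only [psi]
  rw [← Apow_mod, ← Wpow_mod]

instance TprimeFinite (q : ℕ) : Finite (Tprime q) := Finite.of_surjective _ (psi_surj q)

lemma Tprime_card_le (q : ℕ) : Nat.card (Tprime q) ≤ 8 * 3^q := by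
  have h := Nat.card_le_card_of_surjective _ (psi_surj q)
  rw [show 8*3^q = 4*(2*3^q) by ring]
  simpa using h

def ggEquivProd : GG q hq ≃ Q8 × Multiplicative (ZMod (3^q)) where
  toFun x := (x.left, x.right)
  invFun p := ⟨p.1, p.2⟩
  left_inv x := rfl
  right_inv p := rfl

lemma gg_card : Nat.card (GG q hq) = 8 * 3^q := by
  rw [Nat.card_eq_of_bijective _ (ggEquivProd q hq).bijective, Nat.card_prod,
    show Nat.card Q8 = 8 by rw [Nat.card_eq_fintype_card, q8_card]]
  congr 1
  exact Nat.card_zmod (3^q)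

lemma phi_bij : Function.Bijective (phi q hq) := by
  apply Function.Surjective.bijective_of_nat_card_le (phi_surj q hq)
  rw [gg_card]
  exact Tprime_card_le q

noncomputable def eqv : Tprime q ≃* GG q hq := MulEquiv.ofBijective (phi q hq) (phi_bij q hq)

lemma isCyclic_of_le_zpowers {G : Type*} [Group G] {H : Subgroup G} {g : G}
    (h : H ≤ Subgroup.zpowers g) : IsCyclic H := by
  haveI : IsCyclic (Subgroup.zpowers g) := by
    refine ⟨⟨⟨g, Subgroup.mem_zpowers g⟩, ?_⟩⟩
    rintro ⟨x, hx⟩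
    obtain ⟨k, hk⟩ := Subgroup.mem_zpowers_iff.mp hx
    exact Subgroup.mem_zpowers_iff.mpr ⟨k, Subtype.ext (by simpa using hk)⟩
  exact isCyclic_of_surjective _ (Subgroup.subgroupOfEquivOfLe h).surjective

lemma zpowers_ofAdd_eq {m : ℕ} {c d : ZMod m} (h1 : ∃ k : ℤ, k • c = d) (h2 : ∃ k : ℤ, k • d = c) :
    Subgroup.zpowers (ofAdd c) = Subgroup.zpowers (ofAdd d) := by
  apply le_antisymm <;> rw [Subgroup.zpowers_le]
  · rcases h2 with ⟨k, hk⟩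
    exact Subgroup.mem_zpowers_iff.mpr ⟨k, by rw [← ofAdd_zsmul, hk]⟩
  · rcases h1 with ⟨k, hk⟩
    exact Subgroup.mem_zpowers_iff.mpr ⟨k, by rw [← ofAdd_zsmul, hk]⟩

lemma zmod_pow_subgroup (S : Subgroup (Multiplicative (ZMod (3^q)))) :
    ∃ r, r ≤ q ∧ S = Subgroup.zpowers (ofAdd (((3^r : ℕ) : ZMod (3^q)))) := by
  obtain ⟨g, hg⟩ := IsCyclic.exists_generator (α := S)
  have hSg : S = Subgroup.zpowers (g : Multiplicative (ZMod (3^q))) := by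
    apply le_antisymm
    · intro x hx
      obtain ⟨k, hk⟩ := Subgroup.mem_zpowers_iff.mp (hg ⟨x, hx⟩)
      refine Subgroup.mem_zpowers_iff.mpr ⟨k, ?_⟩
      have h2 := congrArg (Subtype.val) hk
      simpa using h2
    · rw [Subgroup.zpowers_le]; exact g.2
  set c : ZMod (3^q) := toAdd (g : Multiplicative (ZMod (3^q))) with hc
  have hdvd : addOrderOf c ∣ 3^q := by
    have h1 : orderOf (g : Multiplicative (ZMod (3^q))) ∣ Nat.card (Multiplicative (ZMod (3^q))) :=
      orderOf_dvd_natCard _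
    rw [show Nat.card (Multiplicative (ZMod (3^q))) = 3^q by
      rw [Nat.card_eq_fintype_card, Fintype.card_multiplicative, ZMod.card]] at h1
    rwa [show orderOf (g : Multiplicative (ZMod (3^q))) = addOrderOf c by
      rw [hc, ← orderOf_ofAdd_eq_addOrderOf, ofAdd_toAdd]] at h1
  -- the gcd is a power of 3
  have hgcd_dvd : Nat.gcd (3^q) c.val ∣ 3^q := Nat.gcd_dvd_left _ _
  obtain ⟨r, hrq, hr⟩ := (Nat.dvd_prime_pow Nat.prime_three).mp hgcd_dvd
  refine ⟨r, hrq, ?_⟩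
  rw [hSg, show (g : Multiplicative (ZMod (3^q))) = ofAdd c by rw [hc, ofAdd_toAdd]]
  have hcv : ((c.val : ℕ) : ZMod (3^q)) = c := ZMod.natCast_rightInverse _
  apply zpowers_ofAdd_eq
  · -- ∃ k, k • c = 3^r  (Bezout)
    refine ⟨Nat.gcdB (3^q) c.val, ?_⟩
    have hbez := Nat.gcd_eq_gcd_ab (3^q) c.val
    have key : ((Nat.gcd (3^q) c.val : ℤ) : ZMod (3^q)) =
        (Nat.gcdB (3^q) c.val : ZMod (3^q)) * c := by
      have h0 : ((3:ZMod (3^q)))^q = 0 := by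
        have h := ZMod.natCast_self (3^q)
        push_cast at h
        exact h
      rw [hbez]
      push_cast
      rw [h0, hcv]
      ring
    rw [zsmul_eq_mul, ← key, hr]
    push_cast
    ring
  · -- ∃ k, k • 3^r = c
    have hdvd2 : Nat.gcd (3^q) c.val ∣ c.val := Nat.gcd_dvd_right _ _
    rw [hr] at hdvd2
    obtain ⟨t, ht⟩ := hdvd2
    refine ⟨t, ?_⟩
    rw [zsmul_eq_mul, ← hcv, ht]
    push_cast
    ring

lemma mem_ker_inl {x : GG q hq} (hx : rightHom x = 1) : ∃ v : Q8, inl v = x := by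
  have h : x ∈ (inl : Q8 →* GG q hq).range := by
    rw [range_inl_eq_ker_rightHom]; exact hx
  exact h

lemma conj_inl (g : GG q hq) (n : Q8) :
    g * inl n * g⁻¹ = inl (g.left * (actHom q hq g.right) n * g.left⁻¹) := by
  obtain ⟨l, r⟩ := g
  show (⟨l, r⟩ : GG q hq) * inl n * (⟨l, r⟩ : GG q hq)⁻¹ = inl (l * (actHom q hq r) n * l⁻¹)
  rw [mk_eq_inl_mul_inr, mul_inv_rev]
  calc inl l * inr r * inl n * ((inr r)⁻¹ * (inl l)⁻¹)
      = inl l * (inr r * inl n * (inr r)⁻¹) * (inl l)⁻¹ := by group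
    _ = inl l * (inr r * inl n * inr r⁻¹) * (inl l)⁻¹ := by rw [map_inv]
    _ = inl l * inl ((actHom q hq r) n) * (inl l)⁻¹ := by rw [← inl_aut]
    _ = _ := by rw [← map_inv, ← map_mul, ← map_mul]

lemma inr_mul_inl (c : Multiplicative (ZMod (3^q))) (n : Q8) :
    (inr c : GG q hq) * inl n = inl ((actHom q hq c) n) * inr c := by
  rw [inl_aut, map_inv]
  group

lemma inr_comm_inl {c : Multiplicative (ZMod (3^q))} (hc : actHom q hq c = 1) (n : Q8) :
    inr c * inl n = inl n * (inr c : GG q hq) := by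
  rw [inr_mul_inl, show (actHom q hq c) n = n by rw [hc]; rfl]

lemma pow_left_of_act (g : GG q hq) (hg : actHom q hq g.right = 1) (k : ℕ) :
    (g^k).left = g.left^k := by
  induction k with
  | zero => simp
  | succ n ih =>
    have hr : (g^n).right = g.right^n := map_pow rightHom g n
    rw [pow_succ, pow_succ, mul_left, ih, hr, map_pow, hg, one_pow]
    simp

lemma zpow_left_of_act (g : GG q hq) (hg : actHom q hq g.right = 1) (k : ℤ) :
    (g^k).left = g.left^k := by
  cases k with
  | ofNat n => simpa using pow_left_of_act q hq g hg n
  | negSucc n =>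
    have hr : (g^(n+1)).right = g.right^(n+1) := map_pow rightHom g (n+1)
    have h2 : actHom q hq ((g.right^(n+1))⁻¹) = 1 := by
      rw [map_inv, map_pow, hg, one_pow, inv_one]
    rw [zpow_negSucc, zpow_negSucc, inv_left, hr, pow_left_of_act q hq g hg (n+1), h2]
    simp

lemma inl_mem_closure (T : Set (GG q hq)) (h0 : inl (xa 0) ∈ T) (h1 : inl (a 1) ∈ T) (x : Q8) :
    (inl x : GG q hq) ∈ Subgroup.closure T := by
  have hmap : Subgroup.map (inl : Q8 →* GG q hq) (Subgroup.closure {xa 0, a 1}) ≤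
      Subgroup.closure T := by
    rw [MonoidHom.map_closure]
    apply (Subgroup.closure_le _).mpr
    rintro _ ⟨v, hv, rfl⟩
    rcases hv with rfl | rfl
    · exact Subgroup.subset_closure h0
    · exact Subgroup.subset_closure h1
  exact hmap ⟨x, by rw [q8_closure_top]; trivial, rfl⟩

lemma inr_mem_of {H' : Subgroup (GG q hq)} (hN : (inl : Q8 →* GG q hq).range ≤ H')
    {c : Multiplicative (ZMod (3^q))} (hc : c ∈ Subgroup.map rightHom H') :
    (inr c : GG q hq) ∈ H' := by
  obtain ⟨h, hh, hph⟩ := hc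
  obtain ⟨hl, hrr⟩ := h
  have h1 : inl hl ∈ H' := hN ⟨hl, rfl⟩
  have hc' : c = hrr := by rw [← hph]; rfl
  have h2 : (inr c : GG q hq) = (inl hl)⁻¹ * ⟨hl, hrr⟩ := by
    rw [hc', mk_eq_inl_mul_inr]
    group
  rw [h2]
  exact mul_mem (inv_mem h1) hh

def c0 (q r : ℕ) : ZMod (3^q) := ((3^r : ℕ) : ZMod (3^q))

lemma act_c0 (r : ℕ) (hr0 : 0 < r) : actHom q hq (ofAdd (c0 q r)) = 1 := by
  show rho ^ (toAdd (ofAdd (c0 q r))).val = 1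
  rw [toAdd_ofAdd, rho_pow_mod]
  have h3q : (3:ℕ) ∣ 3^q := dvd_pow_self 3 (Nat.one_le_iff_ne_zero.mp hq)
  have h3r : (3:ℕ) ∣ 3^r := dvd_pow_self 3 (Nat.pos_iff_ne_zero.mp hr0)
  have hval : (c0 q r).val % 3 = 0 := by
    rw [c0, ZMod.val_natCast, Nat.mod_mod_of_dvd _ h3q]
    omega
  rw [hval, pow_zero]

lemma smul_c0_zero (r : ℕ) (hrq : r ≤ q) : (3^(q-r)) • c0 q r = 0 := by
  have h : (((3^(q-r) * 3^r : ℕ)) : ZMod (3^q)) = 0 := by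
    rw [← pow_add, Nat.sub_add_cancel hrq]
    exact ZMod.natCast_self _
  push_cast at h
  rw [c0, nsmul_eq_mul]
  push_cast
  exact h

lemma smul_c0_mod (r : ℕ) (hrq : r ≤ q) (k : ℕ) :
    (k % 3^(q-r)) • c0 q r = k • c0 q r := by
  conv_rhs => rw [← Nat.div_add_mod k (3^(q-r))]
  rw [add_nsmul, mul_nsmul, smul_c0_zero q r hrq]
  simp

lemma zsmul_c0_mod (r : ℕ) (hrq : r ≤ q) (k : ℤ) :
    (((k : ZMod (3^(q-r))).val : ℤ)) • c0 q r = k • c0 q r := by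
  haveI : NeZero (3^(q-r)) := ⟨pow_ne_zero _ (by norm_num)⟩
  have hdvd : ((3^(q-r) : ℕ) : ℤ) ∣ k - ((k : ZMod (3^(q-r))).val : ℤ) := by
    rw [← ZMod.intCast_zmod_eq_zero_iff_dvd]
    push_cast
    rw [show (((k:ZMod (3^(q-r))).val : ℕ) : ZMod (3^(q-r))) = (k:ZMod (3^(q-r))) from
      ZMod.natCast_rightInverse _]
    ring
  obtain ⟨t, ht⟩ := hdvd
  have hk : k = ((k : ZMod (3^(q-r))).val : ℤ) + ((3^(q-r) : ℕ) : ℤ) * t := by omega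
  conv_rhs => rw [hk]
  rw [add_zsmul, mul_comm, mul_zsmul,
    show ((3^(q-r):ℕ):ℤ) • c0 q r = 0 by rw [natCast_zsmul]; exact smul_c0_zero q r hrq,
    smul_zero, add_zero]

def j3 (r : ℕ) (hrq : r ≤ q) : Multiplicative (ZMod (3^(q-r))) →* GG q hq where
  toFun m := inr (ofAdd ((toAdd m).val • c0 q r))
  map_one' := by simp
  map_mul' m1 m2 := by
    haveI : NeZero (3^(q-r)) := ⟨pow_ne_zero _ (by norm_num)⟩
    have key : (toAdd (m1 * m2)).val • c0 q r
        = (toAdd m1).val • c0 q r + (toAdd m2).val • c0 q r := by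
      rw [show toAdd (m1*m2) = toAdd m1 + toAdd m2 from rfl, ZMod.val_add,
        smul_c0_mod q r hrq, add_nsmul]
    show inr (ofAdd ((toAdd (m1*m2)).val • c0 q r)) = _
    rw [key, ofAdd_add, map_mul]

lemma j3_mem_zpowers (r : ℕ) (hrq : r ≤ q) (m : Multiplicative (ZMod (3^(q-r)))) :
    j3 q hq r hrq m = inr (ofAdd (c0 q r)) ^ ((toAdd m).val) := by
  show inr (ofAdd ((toAdd m).val • c0 q r)) = _
  rw [ofAdd_nsmul, map_pow]

lemma j3_cover (r : ℕ) (hrq : r ≤ q) (k : ℤ) :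
    (inr ((ofAdd (c0 q r))^k) : GG q hq) = j3 q hq r hrq (ofAdd ((k : ZMod (3^(q-r))))) := by
  show _ = inr (ofAdd ((toAdd (ofAdd ((k : ZMod (3^(q-r)))))).val • c0 q r))
  rw [toAdd_ofAdd]
  have key : ((k : ZMod (3^(q-r))).val) • c0 q r = k • c0 q r := by
    rw [← zsmul_c0_mod q r hrq k, natCast_zsmul]
  rw [key, ofAdd_zsmul]

lemma branch1 (H' : Subgroup (GG q hq)) (hN : (inl : Q8 →* GG q hq).range ≤ H')
    (htop : H' ≠ ⊤) :
    ∃ r : ℕ, 0 < r ∧ r ≤ q ∧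
      H' = Subgroup.closure {inl (xa 0), inl (a 1), (inr (ofAdd 1) : GG q hq) ^ (3^r)} ∧
      Nonempty (H' ≃* Q8 × Multiplicative (ZMod (3^(q-r)))) := by
  obtain ⟨r, hrq, hS⟩ := zmod_pow_subgroup q (Subgroup.map rightHom H')
  rw [show (((3^r : ℕ) : ZMod (3^q))) = c0 q r from rfl] at hS
  have hr0 : 0 < r := by
    rcases Nat.eq_zero_or_pos r with h0 | h
    · exfalso
      apply htop
      have hc01 : c0 q r = 1 := by rw [c0, h0, pow_zero, Nat.cast_one]
      have hSt : Subgroup.map rightHom H' = ⊤ := by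
        rw [hS, hc01]
        apply Subgroup.eq_top_of_card_eq
        rw [Nat.card_zpowers, orderOf_ofAdd_eq_addOrderOf, ZMod.addOrderOf_one,
          Nat.card_eq_fintype_card, Fintype.card_multiplicative, ZMod.card]
      rw [eq_top_iff]
      intro x _
      have hx : rightHom x ∈ Subgroup.map rightHom H' := by rw [hSt]; trivial
      obtain ⟨h, hh, hph⟩ := hx
      have hker : rightHom (h⁻¹ * x) = 1 := by rw [map_mul, map_inv, hph]; group
      obtain ⟨v, hv⟩ := mem_ker_inl q hq hker
      have h2 : h⁻¹ * x ∈ H' := by rw [← hv]; exact hN ⟨v, rfl⟩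
      have h3 := mul_mem hh h2
      simpa using h3
    · exact h
  have hinr_c0 : (inr (ofAdd (c0 q r)) : GG q hq) ∈ H' :=
    inr_mem_of q hq hN (hS ▸ Subgroup.mem_zpowers _)
  have hmem_inr : ∀ c : Multiplicative (ZMod (3^q)), c ∈ Subgroup.zpowers (ofAdd (c0 q r)) →
      (inr c : GG q hq) ∈ H' := by
    rintro _ ⟨k, rfl⟩
    rw [map_zpow]
    exact zpow_mem hinr_c0 k
  have hpow : (inr (ofAdd 1) : GG q hq)^(3^r) = inr (ofAdd (c0 q r)) := inr_pow q hq (3^r)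
  refine ⟨r, hr0, hrq, ?_, ?_⟩
  · -- closure equality
    apply le_antisymm
    · intro x hx
      rw [← inl_left_mul_inr_right x]
      apply mul_mem
      · exact inl_mem_closure q hq _ (Set.mem_insert _ _)
          (Set.mem_insert_of_mem _ (Set.mem_insert _ _)) x.left
      · have hx2 : x.right ∈ Subgroup.zpowers (ofAdd (c0 q r)) := hS ▸ ⟨x, hx, rfl⟩
        obtain ⟨k, hk⟩ := Subgroup.mem_zpowers_iff.mp hx2
        rw [← hk, map_zpow]
        refine zpow_mem (Subgroup.subset_closure ?_) k
        rw [← hpow]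
        exact Set.mem_insert_of_mem _ (Set.mem_insert_of_mem _ rfl)
    · rw [Subgroup.closure_le]
      rintro x (rfl | rfl | rfl)
      · exact hN ⟨_, rfl⟩
      · exact hN ⟨_, rfl⟩
      · rw [hpow]; exact hinr_c0
  · -- the isomorphism
    have hcomm : ∀ (x : Q8) (m : Multiplicative (ZMod (3^(q-r)))),
        Commute (inl x : GG q hq) (j3 q hq r hrq m) := by
      intro x m
      have ha : actHom q hq (ofAdd ((toAdd m).val • c0 q r)) = 1 := by
        rw [ofAdd_nsmul, map_pow, act_c0 q hq r hr0, one_pow]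
      show (inl x : GG q hq) * inr (ofAdd ((toAdd m).val • c0 q r))
          = inr (ofAdd ((toAdd m).val • c0 q r)) * inl x
      exact (inr_comm_inl q hq ha x).symm
    haveI : NeZero (3^(q-r)) := ⟨pow_ne_zero _ (by norm_num)⟩
    set FF := MonoidHom.noncommCoprod (inl : Q8 →* GG q hq) (j3 q hq r hrq) hcomm with hFF
    have hFapp : ∀ p : Q8 × Multiplicative (ZMod (3^(q-r))),
        FF p = inl p.1 * j3 q hq r hrq p.2 := fun p => rfl
    have hFmem : ∀ p, FF p ∈ H' := by
      rintro ⟨x, m⟩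
      rw [hFapp]
      refine mul_mem (hN ⟨x, rfl⟩) ?_
      rw [j3_mem_zpowers]
      exact pow_mem hinr_c0 _
    have hFinj : Function.Injective FF := by
      rw [injective_iff_map_eq_one]
      rintro ⟨x, m⟩ hp
      rw [hFapp] at hp
      have hp' : (inl x : GG q hq) * inr (ofAdd ((toAdd m).val • c0 q r)) = 1 := hp
      rw [← mk_eq_inl_mul_inr] at hp'
      have hx : x = 1 := congrArg SemidirectProduct.left hp'
      have hm0 : ofAdd ((toAdd m).val • c0 q r) = (1 : Multiplicative (ZMod (3^q))) :=
        congrArg SemidirectProduct.right hp'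
      have hsm : (toAdd m).val • c0 q r = 0 := by simpa using congrArg toAdd hm0
      have hcast : (((toAdd m).val * 3^r : ℕ) : ZMod (3^q)) = 0 := by
        rw [Nat.cast_mul, Nat.cast_pow, ← Nat.cast_pow, ← nsmul_eq_mul]
        exact hsm
      rw [ZMod.natCast_eq_zero_iff] at hcast
      have hdv : 3^(q-r) ∣ (toAdd m).val := by
        have hq' : (3:ℕ)^q = 3^(q-r) * 3^r := by rw [← pow_add, Nat.sub_add_cancel hrq]
        rw [hq'] at hcast
        exact (Nat.mul_dvd_mul_iff_right (pow_pos (by norm_num) r)).mp hcast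
      have hvlt : (toAdd m).val < 3^(q-r) := ZMod.val_lt _
      have hv0 : (toAdd m).val = 0 := Nat.eq_zero_of_dvd_of_lt hdv hvlt
      have hm1 : m = 1 := by
        have := (ZMod.val_eq_zero _).mp hv0
        rw [show (1 : Multiplicative (ZMod (3^(q-r)))) = ofAdd 0 from rfl, ← this, ofAdd_toAdd]
      exact Prod.ext hx hm1
    have hFrange : ∀ y : GG q hq, y ∈ H' → ∃ p, FF p = y := by
      intro y hy
      have hyr : y.right ∈ Subgroup.zpowers (ofAdd (c0 q r)) := hS ▸ ⟨y, hy, rfl⟩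
      obtain ⟨k, hk⟩ := Subgroup.mem_zpowers_iff.mp hyr
      refine ⟨(y.left, ofAdd ((k : ZMod (3^(q-r))))), ?_⟩
      rw [hFapp]
      show inl y.left * j3 q hq r hrq _ = y
      rw [← j3_cover q hq r hrq k, hk, inl_left_mul_inr_right]
    refine ⟨?_⟩
    have e2 : (Q8 × Multiplicative (ZMod (3^(q-r)))) ≃* H' := by
      refine MulEquiv.ofBijective (FF.codRestrict H' hFmem) ⟨?_, ?_⟩
      · intro p1 p2 h
        exact hFinj (congrArg Subtype.val h)
      · rintro ⟨y, hy⟩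
        obtain ⟨p, hp⟩ := hFrange y hy
        exact ⟨p, Subtype.ext hp⟩
    exact e2.symm

lemma q8_centralizer : ∀ x v : Q8, x ≠ 1 → x ≠ a 2 → x*v = v*x →
    (v = x^0 ∨ v = x^1 ∨ v = x^2 ∨ v = x^3) := by decide

lemma rho_pow_fix : ∀ k : ℕ, (rho^k) (a 2) = a 2 := by
  intro k
  induction k with
  | zero => rfl
  | succ n ih => rw [pow_succ, MulAut.mul_apply, show rho (a 2) = a 2 from by decide, ih]

lemma n_dvd_pow (c : Multiplicative (ZMod (3^q))) : orderOf c ∣ 3^q := by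
  have h1 := orderOf_dvd_natCard c
  rwa [show Nat.card (Multiplicative (ZMod (3^q))) = 3^q by
    rw [Nat.card_eq_fintype_card, Fintype.card_multiplicative, ZMod.card]] at h1

lemma z_central (g : GG q hq) : Commute g (inl (a 2)) := by
  show g * inl (a 2) = inl (a 2) * g
  have hcon := conj_inl q hq g (a 2)
  have hfix : (actHom q hq g.right) (a 2) = a 2 := rho_pow_fix _
  rw [hfix] at hcon
  have h2 : g.left * a 2 * g.left⁻¹ = a 2 := by
    rw [q8_comm_a2 g.left]
    group
  rw [h2] at hcon
  calc g * inl (a 2) = (g * inl (a 2) * g⁻¹) * g := by group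
  _ = inl (a 2) * g := by rw [hcon]

lemma comap_top_imp {H' : Subgroup (GG q hq)}
    (h : Subgroup.comap (inl : Q8 →* GG q hq) H' = ⊤) :
    (inl : Q8 →* GG q hq).range ≤ H' := by
  rintro _ ⟨v, rfl⟩
  have : v ∈ Subgroup.comap (inl : Q8 →* GG q hq) H' := by rw [h]; trivial
  exact this

lemma branch2 (H' : Subgroup (GG q hq)) (hN : ¬ (inl : Q8 →* GG q hq).range ≤ H') :
    IsCyclic H' := by
  obtain ⟨r, hrq, hS⟩ := zmod_pow_subgroup q (Subgroup.map rightHom H')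
  rw [show (((3^r : ℕ) : ZMod (3^q))) = c0 q r from rfl] at hS
  obtain ⟨h, hhH, hph⟩ : ∃ h, h ∈ H' ∧ rightHom h = ofAdd (c0 q r) := by
    have hm : ofAdd (c0 q r) ∈ Subgroup.map rightHom H' := hS ▸ Subgroup.mem_zpowers _
    obtain ⟨h, hh, hph⟩ := hm
    exact ⟨h, hh, hph⟩
  set n := orderOf (ofAdd (c0 q r) : Multiplicative (ZMod (3^q))) with hn
  have hndvd : n ∣ 3^q := n_dvd_pow q _
  obtain ⟨t, htq, htn⟩ := (Nat.dvd_prime_pow Nat.prime_three).mp hndvd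
  have hhn_ker : rightHom (h^n) = 1 := by
    rw [map_pow, hph, hn]
    exact pow_orderOf_eq_one _
  obtain ⟨v', hv'⟩ := mem_ker_inl q hq hhn_ker
  have hv'H : inl v' ∈ H' := by rw [hv']; exact pow_mem hhH n
  have hxr_mem : ∀ x, x ∈ H' → ∃ k : ℤ, (ofAdd (c0 q r))^k = x.right := by
    intro x hx
    exact Subgroup.mem_zpowers_iff.mp (hS ▸ ⟨x, hx, rfl⟩)
  have hKmem : ∀ x, x ∈ H' → rightHom x = 1 → ∃ v : Q8, inl v = x ∧ inl v ∈ H' := by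
    intro x hx hker
    obtain ⟨v, hv⟩ := mem_ker_inl q hq hker
    exact ⟨v, hv, by rw [hv]; exact hx⟩
  by_cases hx4 : ∃ x : Q8, inl x ∈ H' ∧ x ≠ 1 ∧ x ≠ a 2
  · -- some element of "order 4" in the kernel part
    obtain ⟨x0, hx0H, hx01, hx02⟩ := hx4
    have hchi : ∀ g, g ∈ H' → actHom q hq (rightHom g) = 1 := by
      intro g hg
      by_contra hact
      have hconj : g * inl x0 * g⁻¹ ∈ H' := mul_mem (mul_mem hg hx0H) (inv_mem hg)
      rw [conj_inl] at hconj
      have hval : (toAdd (rightHom g)).val % 3 = 1 ∨ (toAdd (rightHom g)).val % 3 = 2 := by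
        have h0 : ¬ ((toAdd (rightHom g)).val % 3 = 0) := by
          intro h0
          apply hact
          show rho ^ (toAdd (rightHom g)).val = 1
          rw [rho_pow_mod, h0, pow_zero]
        omega
      have hnc : ¬ (x0 * (g.left * (actHom q hq g.right) x0 * g.left⁻¹)
          = (g.left * (actHom q hq g.right) x0 * g.left⁻¹) * x0) := by
        have hform : actHom q hq g.right = rho ^ ((toAdd (rightHom g)).val % 3) := by
          show rho ^ (toAdd (rightHom g)).val = _
          exact rho_pow_mod _
        rcases hval with h1 | h1
        · rw [hform, h1, pow_one]
          exact (q8_noncomm x0 g.left hx01 hx02).1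
        · rw [hform, h1, show rho^2 = rho * rho from sq rho,
            show (rho * rho) x0 = rho (rho x0) from rfl]
          exact (q8_noncomm x0 g.left hx01 hx02).2
      apply hN
      apply comap_top_imp
      exact q8_top _ x0 _ hx0H hconj hx01 hx02 hnc
    have hK : ∀ u : Q8, inl u ∈ H' → u ∈ Subgroup.zpowers x0 := by
      intro u hu
      by_cases hcomm : x0 * u = u * x0
      · by_cases hu1 : u = 1
        · rw [hu1]; exact one_mem _
        · by_cases hu2 : u = a 2
          · rw [hu2, ← q8_central x0 hx01 hx02]
            exact pow_mem (Subgroup.mem_zpowers x0) 2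
          · rcases q8_centralizer x0 u hx01 hx02 hcomm with h1|h1|h1|h1 <;>
              (rw [h1]; exact pow_mem (Subgroup.mem_zpowers x0) _)
      · exfalso
        apply hN
        apply comap_top_imp
        exact q8_top _ x0 u hx0H hu hx01 hx02 hcomm
    have hact_h : actHom q hq h.right = 1 := hchi h hhH
    have hv'z : v' ∈ Subgroup.zpowers x0 := hK v' hv'H
    have hlv : h.left^n = v' := by
      have h1 := congrArg SemidirectProduct.left hv'
      rw [left_inl, pow_left_of_act q hq h hact_h n] at h1
      exact h1.symm
    have hhl : h.left ∈ Subgroup.zpowers x0 := by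
      have h8 : h.left^(8:ℕ) = 1 := by
        apply orderOf_dvd_iff_pow_eq_one.mp
        have hc := orderOf_dvd_card (x := h.left)
        rwa [q8_card] at hc
      have hmod : (n*n) % 8 = 1 := by
        have h9 : (9:ℕ)^t % 8 = 1 := by
          have h91 : (9:ℕ) ≡ 1 [MOD 8] := by decide
          calc (9:ℕ)^t % 8 = 1^t % 8 := h91.pow t
          _ = 1 := by simp [Nat.one_pow]
        rw [htn, ← pow_add, show t + t = 2*t by ring, pow_mul]
        norm_num
        exact h9
      have hself : h.left = (h.left^n)^n := by
        rw [← pow_mul, pow_eq_pow_mod (n*n) h8, hmod, pow_one]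
      rw [hself, hlv]
      exact pow_mem hv'z n
    set g0 : GG q hq := ⟨x0, ofAdd (c0 q r)⟩ with hg0
    have hg0act : actHom q hq g0.right = 1 := by
      have : g0.right = rightHom h := by rw [hph]
      rw [this]
      exact hact_h
    apply isCyclic_of_le_zpowers (g := g0)
    intro x hx
    obtain ⟨k, hk⟩ := hxr_mem x hx
    have hxl : x.left ∈ Subgroup.zpowers x0 := by
      have hy : x * (h^k)⁻¹ ∈ H' := mul_mem hx (inv_mem (zpow_mem hhH k))
      have hyr : rightHom (x * (h^k)⁻¹) = 1 := by
        rw [map_mul, map_inv, map_zpow, hph, hk, rightHom_eq_right]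
        group
      obtain ⟨vy, hvy, hvyH⟩ := hKmem _ hy hyr
      have hvyz : vy ∈ Subgroup.zpowers x0 := hK vy hvyH
      have hxeq : x = inl vy * h^k := by rw [hvy]; group
      have hxleft : x.left = vy * h.left^k := by
        rw [hxeq, mul_left, left_inl, right_inl, map_one, MulAut.one_apply,
          zpow_left_of_act q hq h hact_h k]
      rw [hxleft]
      exact mul_mem hvyz (zpow_mem hhl k)
    obtain ⟨e, he⟩ := mem_powers_iff_mem_zpowers.mpr hxl
    have hxr : x.right ∈ Subgroup.zpowers (ofAdd (c0 q r)) := hS ▸ ⟨x, hx, rfl⟩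
    obtain ⟨m, hm⟩ := mem_powers_iff_mem_zpowers.mpr hxr
    have hco : Nat.Coprime 4 n := by
      rw [htn]
      exact Nat.Coprime.pow_right t (by norm_num)
    obtain ⟨k', hk'⟩ := Nat.chineseRemainder hco e m
    refine Subgroup.mem_zpowers_iff.mpr ⟨(k' : ℤ), ?_⟩
    rw [zpow_natCast]
    have hg0pow : g0^(k' : ℕ) = (⟨x0^(k':ℕ), (ofAdd (c0 q r))^(k':ℕ)⟩ : GG q hq) := by
      have hl := pow_left_of_act q hq g0 hg0act (k' : ℕ)
      have hr : (g0^(k':ℕ)).right = (ofAdd (c0 q r))^(k':ℕ) := map_pow rightHom g0 (k':ℕ)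
      rw [← inl_left_mul_inr_right (g0^(k':ℕ)), hl, hr, mk_eq_inl_mul_inr]
    rw [hg0pow]
    have h1 : x0^(k' : ℕ) = x.left := by
      rw [← he]
      apply pow_eq_pow_iff_modEq.mpr
      rw [q8_orderOf x0 hx01 hx02]
      exact hk'.1
    have h2 : (ofAdd (c0 q r))^(k' : ℕ) = x.right := by
      rw [← hm]
      apply pow_eq_pow_iff_modEq.mpr
      rw [← hn]
      exact hk'.2
    rw [h1, h2, mk_eq_inl_mul_inr, inl_left_mul_inr_right]
  · -- kernel part is central
    push_neg at hx4
    set z : GG q hq := inl (a 2) with hz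
    have hz2 : z^2 = 1 := by
      rw [hz, ← map_pow, show (a 2:Q8)^2 = 1 by decide, map_one]
    have hzinv : z⁻¹ = z := by
      rw [inv_eq_iff_mul_eq_one, ← sq, hz2]
    have hcover : ∀ x, x ∈ H' → ∃ k : ℤ, x = h^k ∨ x = z * h^k := by
      intro x hx
      obtain ⟨k, hk⟩ := hxr_mem x hx
      have hy : x * (h^k)⁻¹ ∈ H' := mul_mem hx (inv_mem (zpow_mem hhH k))
      have hyr : rightHom (x * (h^k)⁻¹) = 1 := by
        rw [map_mul, map_inv, map_zpow, hph, hk, rightHom_eq_right]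
        group
      obtain ⟨vy, hvy, hvyH⟩ := hKmem _ hy hyr
      have hxeq : x = inl vy * h^k := by rw [hvy]; group
      by_cases hv1 : vy = 1
      · exact ⟨k, Or.inl (by rw [hxeq, hv1, map_one, one_mul])⟩
      · exact ⟨k, Or.inr (by rw [hxeq, hx4 vy hvyH hv1])⟩
    by_cases hzH : z ∈ H'
    · have hv12 : v' = 1 ∨ v' = a 2 := by
        by_cases h1 : v' = 1
        · exact Or.inl h1
        · exact Or.inr (hx4 v' hv'H h1)
      have hnodd : n % 2 = 1 := by
        have h31 : (3:ℕ) ≡ 1 [MOD 2] := by decide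
        have := h31.pow t
        rw [htn]
        simpa [Nat.ModEq] using this
      rcases hv12 with hv1 | hv2
      · -- h^n = 1, use g0 = z * h
        have hcommzh : Commute z h := (z_central q hq h).symm
        have hzn : (z*h)^n = z := by
          rw [hcommzh.mul_pow, pow_eq_pow_mod n hz2, hnodd, pow_one,
            show h^n = 1 by rw [← hv', hv1, map_one], mul_one]
        apply isCyclic_of_le_zpowers (g := z*h)
        intro x hx
        have hzmem : z ∈ Subgroup.zpowers (z*h) := by
          have hp := pow_mem (Subgroup.mem_zpowers (z*h)) n
          rw [hzn] at hp
          exact hp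
        have hhmem : h ∈ Subgroup.zpowers (z*h) := by
          have hp := mul_mem (inv_mem hzmem) (Subgroup.mem_zpowers (z*h))
          rw [show z⁻¹ * (z*h) = h by group] at hp
          exact hp
        obtain ⟨k, hor⟩ := hcover x hx
        rcases hor with rfl | rfl
        · exact zpow_mem hhmem k
        · exact mul_mem hzmem (zpow_mem hhmem k)
      · -- h^n = z, use g0 = h
        apply isCyclic_of_le_zpowers (g := h)
        intro x hx
        have hzmem : z ∈ Subgroup.zpowers h := by
          rw [hz, ← hv2, hv']
          exact pow_mem (Subgroup.mem_zpowers _) n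
        obtain ⟨k, hor⟩ := hcover x hx
        rcases hor with rfl | rfl
        · exact zpow_mem (Subgroup.mem_zpowers _) k
        · exact mul_mem hzmem (zpow_mem (Subgroup.mem_zpowers _) k)
    · -- z ∉ H' : every element is a power of h
      apply isCyclic_of_le_zpowers (g := h)
      intro x hx
      obtain ⟨k, hor⟩ := hcover x hx
      rcases hor with rfl | rfl
      · exact zpow_mem (Subgroup.mem_zpowers _) k
      · exfalso
        apply hzH
        have : z = (z * h^k) * (h^k)⁻¹ := by group
        rw [this]
        exact mul_mem hx (inv_mem (zpow_mem hhH k))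


/-- Every non-cyclic proper subgroup of `T'_{8·3^q}` is conjugate to
`⟨b, a, w^{3^r}⟩ ≅ Q₈ × Z/3^{q-r}` for some `0 < r ≤ q`. -/
theorem noncyclic_subgroups_Tprime (q : ℕ) (hq : 1 ≤ q)
    (H : Subgroup (Tprime q)) (hH : ¬ IsCyclic H) (hHtop : H ≠ ⊤) :
    ∃ r : ℕ, 0 < r ∧ r ≤ q ∧ ∃ g : Tprime q,
      Subgroup.map (MulAut.conj g).toMonoidHom H =
        Subgroup.closure {Tprime.b q, Tprime.a q, Tprime.w q ^ (3 ^ r)} ∧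
      Nonempty (H ≃* QuaternionGroup 2 × Multiplicative (ZMod (3 ^ (q - r)))) := by

  set e := eqv q hq with he
  set H' := Subgroup.map e.toMonoidHom H with hH'
  have hiso : H ≃* H' := e.subgroupMap H
  by_cases hN : (inl : Q8 →* GG q hq).range ≤ H'
  · have htop' : H' ≠ ⊤ := by
      intro hcontr
      apply hHtop
      apply Subgroup.map_injective (f := e.toMonoidHom) e.injective
      rw [show Subgroup.map e.toMonoidHom ⊤ = ⊤ from
        Subgroup.map_top_of_surjective _ e.surjective]
      exact hcontr
    obtain ⟨r, hr0, hrq, hcl, ⟨iso⟩⟩ := branch1 q hq H' hN htop'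
    refine ⟨r, hr0, hrq, 1, ?_, ⟨hiso.trans iso⟩⟩
    have hconj1 : Subgroup.map (MulAut.conj (1 : Tprime q)).toMonoidHom H = H := by
      rw [show (MulAut.conj (1 : Tprime q)) = 1 from map_one MulAut.conj]
      rw [show (1 : MulAut (Tprime q)).toMonoidHom = MonoidHom.id _ from rfl]
      exact Subgroup.map_id H
    rw [hconj1]
    apply Subgroup.map_injective (f := e.toMonoidHom) e.injective
    rw [MonoidHom.map_closure]
    have himg : (e.toMonoidHom ''
        {Tprime.b q, Tprime.a q, Tprime.w q ^ (3^r)} : Set (GG q hq)) =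
        {inl (xa 0), inl (a 1), (inr (ofAdd 1) : GG q hq)^(3^r)} := by
      rw [Set.image_insert_eq, Set.image_insert_eq, Set.image_singleton]
      rw [show e.toMonoidHom (Tprime.b q) = inl (xa 0) from phi_b q hq]
      rw [show e.toMonoidHom (Tprime.a q) = inl (a 1) from phi_a q hq]
      rw [show e.toMonoidHom (Tprime.w q ^ (3^r)) = (inr (ofAdd 1) : GG q hq)^(3^r) from by
        rw [map_pow]
        congr 1
        exact phi_w q hq]
    rw [himg, ← hcl]
  · exfalso
    apply hH
    haveI hcyc' : IsCyclic H' := branch2 q hq H' hN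
    exact isCyclic_of_surjective _ (hiso.symm.surjective)
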